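/- There exists a universal constant C > 0 with the following property (Lemma 2, narrowband regime). Let R, R3 > 0, let α > 1 and α3 > 1, and set H = αR, H3 = α3 R3. Let Y ⊂ ℝ³ be a finite set separated by at least (H, H, H3), and let I : ℝ³ × ℝ³ → [0, ∞) be any function satisfying I(z, y) ≤ exp(−|z̃ − ỹ|²/(4R²) − (z3 − y3)²/(4R3²)) for all z ∈ ℝ³ and y ∈ Y. Then for every z ∈ ℝ³ and every point N(z) ∈ Y maximizing y ↦ I(z, y) over Y, one has Σ_{y ∈ Y \ {N(z)}} I(z, y) ≤ C · exp(−(min(α, α3)/4)²). -/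

import Mathlib

open Finset

/-- The lattice weight function used in the counting argument. -/
noncomputable def stmt2aux.g : ℤ × ℤ × ℤ → ℝ := fun p =>
  Real.exp (-(|p.1| : ℝ) / 4) *
    (Real.exp (-(|p.2.1| : ℝ) / 4) * Real.exp (-(|p.2.2| : ℝ) / 4))

lemma stmt2aux.f_summable : Summable (fun k : ℤ => Real.exp (-(|k| : ℝ) / 4)) := by
  have h : ∀ k : ℤ, Real.exp (-(|k| : ℝ) / 4) = Real.exp (-(1/4)) ^ k.natAbs := by
    intro k
    rw [← Real.exp_nat_mul]
    congr 1
    have : ((k.natAbs : ℕ) : ℝ) = |(k : ℝ)| := by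
      rw [Nat.cast_natAbs]; push_cast; ring
    rw [this]; ring
  simp only [h]
  apply Summable.of_nat_of_neg <;>
  · simp only [Int.natAbs_natCast, Int.natAbs_neg]
    exact summable_geometric_of_lt_one (Real.exp_nonneg _) (by
      rw [Real.exp_lt_one_iff]; norm_num)

set_option maxHeartbeats 1000000 in
lemma stmt2aux.g_summable : Summable stmt2aux.g := by
  have hf := stmt2aux.f_summable
  have hnn : 0 ≤ fun k : ℤ => Real.exp (-(|k| : ℝ) / 4) := fun k => by positivity
  have h2 : Summable (fun q : ℤ × ℤ =>
      Real.exp (-(|q.1| : ℝ) / 4) * Real.exp (-(|q.2| : ℝ) / 4)) :=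
    hf.mul_of_nonneg hf hnn hnn
  have h2nn : 0 ≤ fun q : ℤ × ℤ =>
      Real.exp (-(|q.1| : ℝ) / 4) * Real.exp (-(|q.2| : ℝ) / 4) := fun q => by positivity
  exact hf.mul_of_nonneg h2 hnn h2nn

lemma stmt2aux.g_nonneg (p : ℤ × ℤ × ℤ) : 0 ≤ stmt2aux.g p := by
  unfold stmt2aux.g; positivity

/-- Lower bound on `|t|` via the floor of `t/h`. -/
lemma stmt2aux.floor_bound (h t : ℝ) (hh : 0 < h) :
    ((max (|⌊t / h⌋| - 1) 0 : ℤ) : ℝ) * h ≤ |t| := by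
  set k : ℤ := ⌊t / h⌋ with hk
  have h1 : (k : ℝ) * h ≤ t := by
    have h1' : (k : ℝ) ≤ t / h := Int.floor_le _
    calc (k : ℝ) * h ≤ (t / h) * h := mul_le_mul_of_nonneg_right h1' hh.le
      _ = t := by field_simp
  have h2 : t < ((k : ℝ) + 1) * h := by
    have h2' : t / h < (k : ℝ) + 1 := by exact_mod_cast Int.lt_floor_add_one (t / h)
    calc t = (t / h) * h := by field_simp
      _ < ((k : ℝ) + 1) * h := mul_lt_mul_of_pos_right h2' hh
  rcases le_or_gt 0 k with hk0 | hk0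
  · have habs : |k| = k := abs_of_nonneg hk0
    have hM : ((max (|k| - 1) 0 : ℤ) : ℝ) ≤ (k : ℝ) := by
      rw [habs]
      have : max (k - 1) 0 ≤ k := by omega
      exact_mod_cast this
    have ht0 : 0 ≤ t := le_trans (by positivity) h1
    rw [abs_of_nonneg ht0]
    calc ((max (|k| - 1) 0 : ℤ) : ℝ) * h ≤ (k : ℝ) * h :=
          mul_le_mul_of_nonneg_right hM hh.le
      _ ≤ t := h1
  · have hM : ((max (|k| - 1) 0 : ℤ) : ℝ) = -(k : ℝ) - 1 := by
      have habs : max (|k| - 1) 0 = -k - 1 := by rw [abs_of_neg hk0]; omega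
      rw [habs]; push_cast; ring
    have ht0 : t < 0 := by
      have : ((k : ℝ) + 1) * h ≤ 0 := by
        apply mul_nonpos_of_nonpos_of_nonneg _ hh.le
        have : (k : ℝ) ≤ -1 := by exact_mod_cast (by omega : k ≤ -1)
        linarith
      linarith
    rw [abs_of_neg ht0, hM]
    nlinarith

lemma stmt2aux.split (h u v w : ℝ) (hh : 0 ≤ h) (hle : h ≤ |u - v|) :
    (h/2)^2 ≤ (w - u)^2 ∨ (h/2)^2 ≤ (w - v)^2 := by
  have htri : |u - v| ≤ |w - u| + |w - v| := by
    have h1 : |u - v| ≤ |u - w| + |w - v| := abs_sub_le u w v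
    rwa [abs_sub_comm u w] at h1
  rcases le_total |w - u| |w - v| with hc | hc
  · right
    have h2 : h ≤ 2 * |w - v| := by linarith
    nlinarith [abs_nonneg (w - v), sq_abs (w - v)]
  · left
    have h2 : h ≤ 2 * |w - u| := by linarith
    nlinarith [abs_nonneg (w - u), sq_abs (w - u)]

lemma stmt2aux.absk_le (k : ℤ) : |k| - 2 ≤ (max (|k| - 1) 0)^2 := by
  rcases le_or_gt |k| 1 with h | h
  · have := sq_nonneg (max (|k| - 1) 0)
    linarith
  · have hm : max (|k| - 1) 0 = |k| - 1 := max_eq_left (by omega)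
    rw [hm]; nlinarith

set_option maxHeartbeats 2000000 in
/-- Lemma 2, narrowband regime: the interaction coefficient of a well-separated source
set is bounded by `C · exp(-(min(α,α₃)/4)²)`. Points of `ℝ³` are written `(z₁, z₂, z₃)`
with cross-range part `(z₁, z₂)` and range coordinate `z₃`. -/
theorem stmt2 :
    ∃ C : ℝ, 0 < C ∧
      ∀ (R R3 α α3 H H3 : ℝ) (Y : Finset (ℝ × ℝ × ℝ))
        (I : (ℝ × ℝ × ℝ) → (ℝ × ℝ × ℝ) → ℝ),
        0 < R → 0 < R3 → 1 < α → 1 < α3 → H = α * R → H3 = α3 * R3 →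
        -- `Y` is separated by at least `(H, H, H3)`
        (∀ y ∈ Y, ∀ y' ∈ Y, y ≠ y' →
          H ≤ |y.1 - y'.1| ∨ H ≤ |y.2.1 - y'.2.1| ∨ H3 ≤ |y.2.2 - y'.2.2|) →
        -- `I` takes values in `[0, ∞)`
        (∀ z y, 0 ≤ I z y) →
        -- Gaussian cross-correlation bound
        (∀ (z : ℝ × ℝ × ℝ), ∀ y ∈ Y,
          I z y ≤ Real.exp (-((z.1 - y.1) ^ 2 + (z.2.1 - y.2.1) ^ 2) / (4 * R ^ 2)
            - (z.2.2 - y.2.2) ^ 2 / (4 * R3 ^ 2))) →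
        -- for every `z` and every maximizer `n = N(z)` of `I z ·` over `Y`
        ∀ (z n : ℝ × ℝ × ℝ), n ∈ Y → (∀ y ∈ Y, I z y ≤ I z n) →
          ∑ y ∈ Y.erase n, I z y ≤ C * Real.exp (-(min α α3 / 4) ^ 2) := by
  refine ⟨Real.exp (25/16) * max (∑' p : ℤ × ℤ × ℤ, stmt2aux.g p) 1,
    mul_pos (Real.exp_pos _) (lt_of_lt_of_le one_pos (le_max_right _ _)), ?_⟩
  intro R R3 α α3 H H3 Y I hR hR3 hα hα3 hHdef hH3def hsep hInn hIb z n hn hmaxi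
  have hα0 : (0:ℝ) < α := by linarith
  have hα30 : (0:ℝ) < α3 := by linarith
  have hH : 0 < H := by rw [hHdef]; positivity
  have hH3 : 0 < H3 := by rw [hH3def]; positivity
  have hRne : R ≠ 0 := ne_of_gt hR
  have hR3ne : R3 ≠ 0 := ne_of_gt hR3
  set m : ℝ := min α α3 with hmdef
  have hm1 : 1 ≤ m := le_min hα.le hα3.le
  have hm0 : (0:ℝ) ≤ m := by linarith
  have hmα : m ≤ α := min_le_left _ _
  have hmα3 : m ≤ α3 := min_le_right _ _
  set D : ℝ × ℝ × ℝ → ℝ := fun y =>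
    ((z.1 - y.1) ^ 2 + (z.2.1 - y.2.1) ^ 2) / (4 * R ^ 2)
      + (z.2.2 - y.2.2) ^ 2 / (4 * R3 ^ 2) with hDdef
  clear_value m D
  have hIup : ∀ y ∈ Y, I z y ≤ Real.exp (-D y) := by
    intro y hy
    have h := hIb z y hy
    have e : -((z.1 - y.1) ^ 2 + (z.2.1 - y.2.1) ^ 2) / (4 * R ^ 2)
        - (z.2.2 - y.2.2) ^ 2 / (4 * R3 ^ 2) = -D y := by
      simp only [hDdef]; ring
    rwa [e] at h
  -- slot lower bounds for D
  have hslot1 : ∀ w : ℝ × ℝ × ℝ, (z.1 - w.1)^2 / (4*R^2) ≤ D w := by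
    intro w
    simp only [hDdef]
    rw [add_div]
    have h1 : 0 ≤ (z.2.1 - w.2.1)^2 / (4*R^2) := by positivity
    have h2 : 0 ≤ (z.2.2 - w.2.2)^2 / (4*R3^2) := by positivity
    linarith
  have hslot2 : ∀ w : ℝ × ℝ × ℝ, (z.2.1 - w.2.1)^2 / (4*R^2) ≤ D w := by
    intro w
    simp only [hDdef]
    rw [add_div]
    have h1 : 0 ≤ (z.1 - w.1)^2 / (4*R^2) := by positivity
    have h2 : 0 ≤ (z.2.2 - w.2.2)^2 / (4*R3^2) := by positivity
    linarith
  have hslot3 : ∀ w : ℝ × ℝ × ℝ, (z.2.2 - w.2.2)^2 / (4*R3^2) ≤ D w := by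
    intro w
    simp only [hDdef]
    have h1 : 0 ≤ ((z.1 - w.1)^2 + (z.2.1 - w.2.1)^2) / (4*R^2) := by positivity
    linarith
  set jm : ℝ × ℝ × ℝ → ℤ × ℤ × ℤ := fun y =>
    (⌊(y.1 - z.1) / H⌋, ⌊(y.2.1 - z.2.1) / H⌋, ⌊(y.2.2 - z.2.2) / H3⌋) with hjm
  -- injectivity of jm on Y.erase n
  have hfloor_eq : ∀ (h a b : ℝ), 0 < h → ⌊a / h⌋ = ⌊b / h⌋ → |a - b| < h := by
    intro h a b hh he
    have h1 : ((⌊a/h⌋ : ℤ) : ℝ) ≤ a / h := Int.floor_le _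
    have h2 : a / h < (⌊a/h⌋ : ℤ) + 1 := Int.lt_floor_add_one _
    have h3 : ((⌊b/h⌋ : ℤ) : ℝ) ≤ b / h := Int.floor_le _
    have h4 : b / h < (⌊b/h⌋ : ℤ) + 1 := Int.lt_floor_add_one _
    rw [he] at h1 h2
    have ea : a = (a/h) * h := by field_simp
    have eb : b = (b/h) * h := by field_simp
    rw [abs_lt]
    constructor <;> nlinarith [h1, h2, h3, h4, hh]
  have hinj : ∀ y ∈ Y.erase n, ∀ y' ∈ Y.erase n, jm y = jm y' → y = y' := by
    intro y hy y' hy' he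
    by_contra hne
    simp only [hjm, Prod.mk.injEq] at he
    obtain ⟨e1, e2, e3⟩ := he
    rcases hsep y (mem_of_mem_erase hy) y' (mem_of_mem_erase hy') hne with h | h | h
    · have := hfloor_eq H (y.1 - z.1) (y'.1 - z.1) hH e1
      have e : (y.1 - z.1) - (y'.1 - z.1) = y.1 - y'.1 := by ring
      rw [e] at this
      linarith [h, this]
    · have := hfloor_eq H (y.2.1 - z.2.1) (y'.2.1 - z.2.1) hH e2
      have e : (y.2.1 - z.2.1) - (y'.2.1 - z.2.1) = y.2.1 - y'.2.1 := by ring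
      rw [e] at this
      linarith [h, this]
    · have := hfloor_eq H3 (y.2.2 - z.2.2) (y'.2.2 - z.2.2) hH3 e3
      have e : (y.2.2 - z.2.2) - (y'.2.2 - z.2.2) = y.2.2 - y'.2.2 := by ring
      rw [e] at this
      linarith [h, this]
  -- per-term bound
  have hterm : ∀ y ∈ Y.erase n,
      I z y ≤ Real.exp (25/16) * Real.exp (-(m/4)^2) * stmt2aux.g (jm y) := by
    intro y hy
    have hyY : y ∈ Y := mem_of_mem_erase hy
    have hyn : y ≠ n := ne_of_mem_erase hy
    have hImax : I z y ≤ Real.exp (-(max (D y) (D n))) := by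
      rcases max_choice (D y) (D n) with h | h <;> rw [h]
      · exact hIup y hyY
      · exact (hmaxi y hyY).trans (hIup n hn)
    -- separation gives key bound
    have hHsq : (H/2)^2/(4*R^2) = α^2/16 := by rw [hHdef]; field_simp; ring
    have hH3sq : (H3/2)^2/(4*R3^2) = α3^2/16 := by rw [hH3def]; field_simp; ring
    have hkey : m^2/16 ≤ max (D y) (D n) := by
      have hma : m^2/16 ≤ α^2/16 := by nlinarith
      have hma3 : m^2/16 ≤ α3^2/16 := by nlinarith
      rcases hsep y hyY n hn hyn with h | h | h
      · rcases stmt2aux.split H y.1 n.1 z.1 hH.le h with hc | hc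
        · refine le_trans ?_ ((hslot1 y).trans (le_max_left _ _))
          calc m^2/16 ≤ (H/2)^2/(4*R^2) := by rw [hHsq]; exact hma
            _ ≤ (z.1 - y.1)^2/(4*R^2) := by gcongr
        · refine le_trans ?_ ((hslot1 n).trans (le_max_right _ _))
          calc m^2/16 ≤ (H/2)^2/(4*R^2) := by rw [hHsq]; exact hma
            _ ≤ (z.1 - n.1)^2/(4*R^2) := by gcongr
      · rcases stmt2aux.split H y.2.1 n.2.1 z.2.1 hH.le h with hc | hc
        · refine le_trans ?_ ((hslot2 y).trans (le_max_left _ _))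
          calc m^2/16 ≤ (H/2)^2/(4*R^2) := by rw [hHsq]; exact hma
            _ ≤ (z.2.1 - y.2.1)^2/(4*R^2) := by gcongr
        · refine le_trans ?_ ((hslot2 n).trans (le_max_right _ _))
          calc m^2/16 ≤ (H/2)^2/(4*R^2) := by rw [hHsq]; exact hma
            _ ≤ (z.2.1 - n.2.1)^2/(4*R^2) := by gcongr
      · rcases stmt2aux.split H3 y.2.2 n.2.2 z.2.2 hH3.le h with hc | hc
        · refine le_trans ?_ ((hslot3 y).trans (le_max_left _ _))
          calc m^2/16 ≤ (H3/2)^2/(4*R3^2) := by rw [hH3sq]; exact hma3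
            _ ≤ (z.2.2 - y.2.2)^2/(4*R3^2) := by gcongr
        · refine le_trans ?_ ((hslot3 n).trans (le_max_right _ _))
          calc m^2/16 ≤ (H3/2)^2/(4*R3^2) := by rw [hH3sq]; exact hma3
            _ ≤ (z.2.2 - n.2.2)^2/(4*R3^2) := by gcongr
    -- lattice lower bound on D y
    set k1 : ℤ := ⌊(y.1 - z.1) / H⌋ with hk1
    set k2 : ℤ := ⌊(y.2.1 - z.2.1) / H⌋ with hk2
    set k3 : ℤ := ⌊(y.2.2 - z.2.2) / H3⌋ with hk3
    set M1 : ℤ := max (|k1| - 1) 0 with hM1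
    set M2 : ℤ := max (|k2| - 1) 0 with hM2
    set M3 : ℤ := max (|k3| - 1) 0 with hM3
    have hjmy : jm y = (k1, k2, k3) := by rw [hjm]
    have hM1r : (0:ℝ) ≤ (M1:ℝ) := by exact_mod_cast le_max_right (|k1| - 1) 0
    have hM2r : (0:ℝ) ≤ (M2:ℝ) := by exact_mod_cast le_max_right (|k2| - 1) 0
    have hM3r : (0:ℝ) ≤ (M3:ℝ) := by exact_mod_cast le_max_right (|k3| - 1) 0
    have hb1 := stmt2aux.floor_bound H (y.1 - z.1) hH
    have hb2 := stmt2aux.floor_bound H (y.2.1 - z.2.1) hH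
    have hb3 := stmt2aux.floor_bound H3 (y.2.2 - z.2.2) hH3
    rw [← hk1, ← hM1] at hb1
    rw [← hk2, ← hM2] at hb2
    rw [← hk3, ← hM3] at hb3
    have hsq1 : (M1:ℝ)^2 * H^2 ≤ (z.1 - y.1)^2 := by
      nlinarith [mul_self_le_mul_self (mul_nonneg hM1r hH.le) hb1,
        sq_abs (y.1 - z.1)]
    have hsq2 : (M2:ℝ)^2 * H^2 ≤ (z.2.1 - y.2.1)^2 := by
      nlinarith [mul_self_le_mul_self (mul_nonneg hM2r hH.le) hb2,
        sq_abs (y.2.1 - z.2.1)]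
    have hsq3 : (M3:ℝ)^2 * H3^2 ≤ (z.2.2 - y.2.2)^2 := by
      nlinarith [mul_self_le_mul_self (mul_nonneg hM3r hH3.le) hb3,
        sq_abs (y.2.2 - z.2.2)]
    have hs1 : (M1:ℝ)^2 * (m^2/4) ≤ (z.1 - y.1)^2 / (4*R^2) := by
      have e : (M1:ℝ)^2 * H^2/(4*R^2) = (M1:ℝ)^2 * (α^2/4) := by
        rw [hHdef]; field_simp
      have h1 : (M1:ℝ)^2 * H^2/(4*R^2) ≤ (z.1 - y.1)^2/(4*R^2) := by gcongr
      have h2 : (M1:ℝ)^2 * (m^2/4) ≤ (M1:ℝ)^2 * (α^2/4) := by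
        apply mul_le_mul_of_nonneg_left _ (by positivity)
        nlinarith
      linarith [e ▸ h1]
    have hs2 : (M2:ℝ)^2 * (m^2/4) ≤ (z.2.1 - y.2.1)^2 / (4*R^2) := by
      have e : (M2:ℝ)^2 * H^2/(4*R^2) = (M2:ℝ)^2 * (α^2/4) := by
        rw [hHdef]; field_simp
      have h1 : (M2:ℝ)^2 * H^2/(4*R^2) ≤ (z.2.1 - y.2.1)^2/(4*R^2) := by gcongr
      have h2 : (M2:ℝ)^2 * (m^2/4) ≤ (M2:ℝ)^2 * (α^2/4) := by
        apply mul_le_mul_of_nonneg_left _ (by positivity)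
        nlinarith
      linarith [e ▸ h1]
    have hs3 : (M3:ℝ)^2 * (m^2/4) ≤ (z.2.2 - y.2.2)^2 / (4*R3^2) := by
      have e : (M3:ℝ)^2 * H3^2/(4*R3^2) = (M3:ℝ)^2 * (α3^2/4) := by
        rw [hH3def]; field_simp
      have h1 : (M3:ℝ)^2 * H3^2/(4*R3^2) ≤ (z.2.2 - y.2.2)^2/(4*R3^2) := by gcongr
      have h2 : (M3:ℝ)^2 * (m^2/4) ≤ (M3:ℝ)^2 * (α3^2/4) := by
        apply mul_le_mul_of_nonneg_left _ (by positivity)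
        nlinarith
      linarith [e ▸ h1]
    have hDyS : ((M1^2 + M2^2 + M3^2 : ℤ) : ℝ) * (m^2/4) ≤ D y := by
      have e : D y = ((z.1 - y.1)^2 + (z.2.1 - y.2.1)^2)/(4*R^2)
          + (z.2.2 - y.2.2)^2/(4*R3^2) := by simp only [hDdef]
      rw [e, add_div]
      push_cast
      linarith
    -- exponent bound
    have hL : ((|k1| + |k2| + |k3| : ℤ) : ℝ) ≤ ((M1^2 + M2^2 + M3^2 : ℤ) : ℝ) + 6 := by
      have i1 := stmt2aux.absk_le k1
      have i2 := stmt2aux.absk_le k2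
      have i3 := stmt2aux.absk_le k3
      rw [← hM1] at i1; rw [← hM2] at i2; rw [← hM3] at i3
      push_cast
      have : (|k1| + |k2| + |k3| : ℤ) ≤ (M1^2 + M2^2 + M3^2) + 6 := by linarith
      exact_mod_cast this
    have hexp : m^2/16 + ((|k1| + |k2| + |k3| : ℤ) : ℝ)/4 - 25/16 ≤ max (D y) (D n) := by
      have hS0 : (0:ℤ) ≤ M1^2 + M2^2 + M3^2 := by positivity
      rcases hS0.eq_or_lt with h0 | h1
      · have hL6 : ((|k1| + |k2| + |k3| : ℤ) : ℝ) ≤ 6 := by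
          rw [← h0] at hL; simpa using hL
        linarith
      · have h1' : (1:ℤ) ≤ M1^2 + M2^2 + M3^2 := h1
        have hS1 : (1:ℝ) ≤ ((M1^2 + M2^2 + M3^2 : ℤ) : ℝ) := by exact_mod_cast h1'
        have hmax := le_max_left (D y) (D n)
        have hprod : 0 ≤ (m^2 - 1) * (4 * ((M1^2 + M2^2 + M3^2 : ℤ) : ℝ) - 1) :=
          mul_nonneg (by nlinarith [sq_nonneg (m - 1)]) (by linarith)
        linarith
    calc I z y ≤ Real.exp (-(max (D y) (D n))) := hImax
      _ ≤ Real.exp (-(m^2/16 + ((|k1| + |k2| + |k3| : ℤ) : ℝ)/4 - 25/16)) :=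
          Real.exp_le_exp.mpr (by linarith)
      _ = Real.exp (25/16) * Real.exp (-(m/4)^2) * stmt2aux.g (jm y) := by
          rw [hjmy]
          simp only [stmt2aux.g]
          rw [← Real.exp_add, ← Real.exp_add, ← Real.exp_add, ← Real.exp_add]
          congr 1
          push_cast
          ring
  -- sum up
  have hsum : ∑ y ∈ Y.erase n, stmt2aux.g (jm y)
      ≤ max (∑' p : ℤ × ℤ × ℤ, stmt2aux.g p) 1 := by
    calc ∑ y ∈ Y.erase n, stmt2aux.g (jm y)
        = ∑ p ∈ (Y.erase n).image jm, stmt2aux.g p := (Finset.sum_image hinj).symm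
      _ ≤ ∑' p : ℤ × ℤ × ℤ, stmt2aux.g p :=
          Summable.sum_le_tsum _ (fun p _ => stmt2aux.g_nonneg p) stmt2aux.g_summable
      _ ≤ max (∑' p : ℤ × ℤ × ℤ, stmt2aux.g p) 1 := le_max_left _ _
  calc ∑ y ∈ Y.erase n, I z y
      ≤ ∑ y ∈ Y.erase n, Real.exp (25/16) * Real.exp (-(m/4)^2) * stmt2aux.g (jm y) :=
        Finset.sum_le_sum hterm
    _ = Real.exp (25/16) * Real.exp (-(m/4)^2) * ∑ y ∈ Y.erase n, stmt2aux.g (jm y) := by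
        rw [Finset.mul_sum]
    _ ≤ Real.exp (25/16) * Real.exp (-(m/4)^2)
          * max (∑' p : ℤ × ℤ × ℤ, stmt2aux.g p) 1 := by
        apply mul_le_mul_of_nonneg_left hsum (by positivity)
    _ = Real.exp (25/16) * max (∑' p : ℤ × ℤ × ℤ, stmt2aux.g p) 1
          * Real.exp (-(m/4)^2) := by ring
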